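/- Let k ≥ 1 be an integer and let w be a real number. Then there exist distinct integers r_0, …, r_k and an integer M ≥ 1 such that the set S = {ξ ∈ ℝ : ω_k(ξ) ≥ w} satisfies S ⊆ ⋃_{i=0}^{k} τ_i^{−1}(S^lead), where S^lead = {ξ ∈ ℝ : ω_k^lead(ξ) ≥ w} and τ_i(ξ) = 1/(M(ξ − r_i)) for each ξ ∈ ℝ \ {r_i}. Moreover S^lead ⊆ S. -/

import Mathlib

open Polynomial Filter

/-- The height (maximum absolute value of coefficients) of an integer polynomial,
as a real number. -/
noncomputable def intPolyNorm (P : Polynomial ℤ) : ℝ :=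
  ((P.support.sup fun i => (P.coeff i).natAbs : ℕ) : ℝ)

/-- The height (maximum absolute value of coefficients) of a real polynomial. -/
noncomputable def realPolyNorm (P : Polynomial ℝ) : ℝ :=
  (Finset.range (P.natDegree + 1)).sup' Finset.nonempty_range_add_one fun i => |P.coeff i|

/-- The maximum norm of an integer vector, as a real number. -/
noncomputable def vecNorm {n : ℕ} (x : Fin (n + 1) → ℤ) : ℝ :=
  ((Finset.univ.sup fun i => (x i).natAbs : ℕ) : ℝ)

/-- The exponent `ω_n(ξ)`: the supremum (in `EReal`) of all `ω ∈ ℝ` for which there are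
infinitely many nonzero `P ∈ ℤ[x]` with `deg P ≤ n` and `|P(ξ)| ≤ ‖P‖ ^ (-ω)`. -/
noncomputable def omegaExp (n : ℕ) (ξ : ℝ) : EReal :=
  sSup (Real.toEReal '' {ω : ℝ |
    {P : Polynomial ℤ | P ≠ 0 ∧ P.natDegree ≤ n ∧
      |Polynomial.aeval ξ P| ≤ intPolyNorm P ^ (-ω)}.Infinite})

/-- The exponent `ω_n^lead(ξ)`: as `ω_n(ξ)`, but restricted to polynomials whose
coefficient of `x^n` has absolute value equal to the height. -/
noncomputable def omegaLeadExp (n : ℕ) (ξ : ℝ) : EReal :=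
  sSup (Real.toEReal '' {ω : ℝ |
    {P : Polynomial ℤ | P ≠ 0 ∧ P.natDegree ≤ n ∧
      ((P.coeff n).natAbs : ℝ) = intPolyNorm P ∧
      |Polynomial.aeval ξ P| ≤ intPolyNorm P ^ (-ω)}.Infinite})

/-- The exponent `λ_n(ξ)`: the supremum (in `EReal`) of all `λ ∈ ℝ` for which there are
infinitely many nonzero `x = (x_0, …, x_n) ∈ ℤ^{n+1}` with
`max_{1 ≤ m ≤ n} |x_0 ξ^m − x_m| ≤ ‖x‖ ^ (−λ)`. -/
noncomputable def lambdaExp (n : ℕ) (ξ : ℝ) : EReal :=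
  sSup (Real.toEReal '' {l : ℝ |
    {x : Fin (n + 1) → ℤ | x ≠ 0 ∧ ∀ m : Fin (n + 1), 1 ≤ (m : ℕ) →
      |(x 0 : ℝ) * ξ ^ (m : ℕ) - (x m : ℝ)| ≤ vecNorm x ^ (-l)}.Infinite})

/-- The polynomial `Q(x) = (Mx)^k · P(1/(Mx) + r)`, i.e. `∑_{j=0}^{k} a_j M^{k−j} x^{k−j}`
where `P(x + r) = ∑_j a_j x^j`. -/
noncomputable def Qpoly (k : ℕ) (M : ℤ) (r : ℤ) (P : Polynomial ℤ) : Polynomial ℤ :=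
  ∑ j ∈ Finset.range (k + 1),
    Polynomial.C ((P.comp (Polynomial.X + Polynomial.C r)).coeff j * M ^ (k - j)) *
      Polynomial.X ^ (k - j)

lemma intPolyNorm_nonneg (P : Polynomial ℤ) : 0 ≤ intPolyNorm P := Nat.cast_nonneg _

lemma natAbs_coeff_le (P : Polynomial ℤ) (n : ℕ) :
    (((P.coeff n).natAbs : ℝ)) ≤ intPolyNorm P := by
  rcases eq_or_ne (P.coeff n) 0 with h | h
  · simp [h, intPolyNorm_nonneg]
  · exact Nat.cast_le.2 (Finset.le_sup (f := fun i => (P.coeff i).natAbs)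
      (Polynomial.mem_support_iff.2 h))

lemma one_le_intPolyNorm {P : Polynomial ℤ} (hP : P ≠ 0) : 1 ≤ intPolyNorm P := by
  obtain ⟨n, hn⟩ := Polynomial.support_nonempty.2 hP
  have h1 : 1 ≤ (P.coeff n).natAbs := Int.natAbs_pos.2 (Polynomial.mem_support_iff.1 hn)
  calc (1:ℝ) ≤ ((P.coeff n).natAbs : ℝ) := by exact_mod_cast h1
    _ ≤ _ := natAbs_coeff_le P n

lemma intPolyNorm_pos {P : Polynomial ℤ} (hP : P ≠ 0) : 0 < intPolyNorm P :=
  lt_of_lt_of_le one_pos (one_le_intPolyNorm hP)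

lemma intPolyNorm_le {P : Polynomial ℤ} {b : ℕ} (h : ∀ n, (P.coeff n).natAbs ≤ b) :
    intPolyNorm P ≤ (b : ℝ) :=
  Nat.cast_le.2 (Finset.sup_le fun n _ => h n)

lemma intPolyNorm_eq_of_dominant {P : Polynomial ℤ} {m : ℕ} (hm : P.coeff m ≠ 0)
    (h : ∀ n, (P.coeff n).natAbs ≤ (P.coeff m).natAbs) :
    ((P.coeff m).natAbs : ℝ) = intPolyNorm P := by
  have : (P.support.sup fun i => (P.coeff i).natAbs) = (P.coeff m).natAbs :=
    le_antisymm (Finset.sup_le fun n _ => h n)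
      (Finset.le_sup (f := fun i => (P.coeff i).natAbs) (Polynomial.mem_support_iff.2 hm))
  rw [intPolyNorm, this]

/-- Finiteness of integer polynomials of bounded degree and height. -/
lemma finite_polys (k : ℕ) (H : ℝ) :
    {Q : Polynomial ℤ | Q.natDegree ≤ k ∧ intPolyNorm Q ≤ H}.Finite := by
  classical
  set B : ℤ := ⌈H⌉ with hB
  apply Set.Finite.of_finite_image (f := fun Q : Polynomial ℤ => fun m : Fin (k+1) => Q.coeff m)
  · apply Set.Finite.subset (Set.Finite.pi fun _ : Fin (k+1) => Set.finite_Icc (-B) B)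
    rintro x ⟨Q, ⟨hd, hn⟩, rfl⟩
    intro m _
    have h1 : ((Q.coeff m).natAbs : ℝ) ≤ H := (natAbs_coeff_le Q m).trans hn
    have h4 : ((Q.coeff m).natAbs : ℝ) ≤ (B : ℝ) := h1.trans (by exact_mod_cast Int.le_ceil H)
    rw [Nat.cast_natAbs] at h4
    have h2 : |Q.coeff (m:ℕ)| ≤ B := by exact_mod_cast h4
    exact Set.mem_Icc.mpr (abs_le.mp h2)
  · rintro Q ⟨hd, _⟩ Q' ⟨hd', _⟩ h
    ext n
    rcases le_or_gt n k with hn | hn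
    · exact congrFun h ⟨n, by omega⟩
    · rw [Polynomial.coeff_eq_zero_of_natDegree_lt (lt_of_le_of_lt hd hn),
        Polynomial.coeff_eq_zero_of_natDegree_lt (lt_of_le_of_lt hd' hn)]

lemma le_sSup_of_forall_lt_mem {w : ℝ} {s : Set ℝ} (h : ∀ x, x < w → x ∈ s) :
    (w : EReal) ≤ sSup (Real.toEReal '' s) := by
  by_contra hlt
  push_neg at hlt
  obtain ⟨x, hx1, hx2⟩ := EReal.lt_iff_exists_real_btwn.mp hlt
  exact absurd (le_sSup (Set.mem_image_of_mem _ (h x (by exact_mod_cast hx2))))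
    (not_le.mpr hx1)

lemma exists_gt_of_le_sSup {w x : ℝ} {s : Set ℝ}
    (hw : (w : EReal) ≤ sSup (Real.toEReal '' s)) (hx : x < w) : ∃ y ∈ s, x < y := by
  have h1 : (x : EReal) < sSup (Real.toEReal '' s) :=
    lt_of_lt_of_le (by exact_mod_cast hx) hw
  obtain ⟨b, ⟨y, hy, rfl⟩, hb⟩ := lt_sSup_iff.mp h1
  exact ⟨y, hy, by exact_mod_cast hb⟩

lemma coeff_C_mul_X_pow' (a : ℤ) (n m : ℕ) :
    (Polynomial.C a * Polynomial.X ^ n).coeff m = if m = n then a else 0 := by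
  rw [Polynomial.coeff_C_mul, Polynomial.coeff_X_pow]
  split <;> simp

lemma Qpoly_coeff (k : ℕ) (M r : ℤ) (P : Polynomial ℤ) (m : ℕ) (hm : m ≤ k) :
    (Qpoly k M r P).coeff m = (P.comp (X + C r)).coeff (k - m) * M ^ m := by
  classical
  rw [Qpoly, finset_sum_coeff, Finset.sum_eq_single (k - m)]
  · have h : k - (k - m) = m := by omega
    rw [coeff_C_mul_X_pow', if_pos h.symm, h]
  · intro j hj hne
    have hj' : j ≤ k := by have := Finset.mem_range.mp hj; omega
    have hne' : ¬ m = k - j := by omega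
    rw [coeff_C_mul_X_pow', if_neg hne']
  · intro h; exact absurd (Finset.mem_range.mpr (by omega)) h

lemma Qpoly_coeff_eq_zero (k : ℕ) (M r : ℤ) (P : Polynomial ℤ) (m : ℕ) (hm : k < m) :
    (Qpoly k M r P).coeff m = 0 := by
  classical
  rw [Qpoly, finset_sum_coeff]
  apply Finset.sum_eq_zero
  intro j hj
  have hj' : j ≤ k := by have := Finset.mem_range.mp hj; omega
  have hne' : ¬ m = k - j := by omega
  rw [coeff_C_mul_X_pow', if_neg hne']

lemma Qpoly_natDegree_le (k : ℕ) (M r : ℤ) (P : Polynomial ℤ) :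
    (Qpoly k M r P).natDegree ≤ k :=
  Polynomial.natDegree_le_iff_coeff_eq_zero.2 fun m hm => Qpoly_coeff_eq_zero k M r P m hm

lemma natDegree_comp_X_add_C_le {k : ℕ} {P : Polynomial ℤ} (hP : P.natDegree ≤ k) (r : ℤ) :
    (P.comp (X + C r)).natDegree ≤ k := by
  rw [natDegree_comp, natDegree_X_add_C, mul_one]; exact hP

lemma Qpoly_aeval (k : ℕ) (M r : ℤ) (P : Polynomial ℤ) (hP : P.natDegree ≤ k)
    {η : ℝ} (hη : (M : ℝ) * η ≠ 0) :
    Polynomial.aeval η (Qpoly k M r P)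
      = ((M:ℝ) * η) ^ k * Polynomial.aeval (1 / ((M:ℝ) * η) + (r:ℝ)) P := by
  set u := (M:ℝ) * η with hu_def
  have hu : u ≠ 0 := hη
  set Pc := P.comp (X + C r) with hPc
  have hdeg : Pc.natDegree < k + 1 :=
    lt_of_le_of_lt (natDegree_comp_X_add_C_le hP r) (Nat.lt_succ_self k)
  have h1 : Polynomial.aeval (1 / u + (r:ℝ)) P = Polynomial.aeval (1 / u) Pc := by
    rw [hPc, aeval_comp]; simp
  rw [h1, aeval_eq_sum_range' hdeg, Qpoly, map_sum, Finset.mul_sum]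
  apply Finset.sum_congr rfl
  intro j hj
  have hjk : j ≤ k := by have := Finset.mem_range.mp hj; omega
  have h3 : u ^ (k - j) * u ^ j = u ^ k := by rw [← pow_add]; congr 1; omega
  have h4 : u ^ k * (1 / u) ^ j = u ^ (k - j) := by
    rw [one_div, inv_pow, ← h3, mul_assoc, mul_inv_cancel₀ (pow_ne_zero j hu), mul_one]
  simp only [map_mul, aeval_C, map_pow, aeval_X, zsmul_eq_mul]
  have hR : u ^ k * ((Pc.coeff j : ℝ) * (1 / u) ^ j) = (Pc.coeff j : ℝ) * u ^ (k - j) := by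
    rw [← h4]; ring
  rw [hR]
  simp only [algebraMap_int_eq, eq_intCast, hu_def, mul_pow, hPc]
  push_cast
  ring

lemma Qpoly_injOn (k : ℕ) {M : ℤ} (hM : M ≠ 0) (r : ℤ) :
    Set.InjOn (Qpoly k M r) {P : Polynomial ℤ | P.natDegree ≤ k} := by
  intro P hP P' hP' h
  have hc : P.comp (X + C r) = P'.comp (X + C r) := by
    ext n
    rcases le_or_gt n k with hn | hn
    · have h2 := congrArg (fun Q => Q.coeff (k - n)) h
      rw [Qpoly_coeff k M r P (k - n) (by omega), Qpoly_coeff k M r P' (k - n) (by omega)] at h2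
      have hkn : k - (k - n) = n := by omega
      rw [hkn] at h2
      exact mul_right_cancel₀ (pow_ne_zero _ hM) h2
    · rw [coeff_eq_zero_of_natDegree_lt (lt_of_le_of_lt (natDegree_comp_X_add_C_le hP r) hn),
        coeff_eq_zero_of_natDegree_lt (lt_of_le_of_lt (natDegree_comp_X_add_C_le hP' r) hn)]
  have h3 := congrArg (fun Q => Q.comp (X - C r)) hc
  simpa [comp_assoc, add_comp, X_comp, C_comp, sub_add_cancel] using h3

/-- coefficient bound for shifted polynomial -/
lemma comp_coeff_bound (k : ℕ) :
    ∃ B : ℤ, 1 ≤ B ∧ ∀ r : ℤ, r.natAbs ≤ k → ∀ P : Polynomial ℤ, P.natDegree ≤ k → ∀ j : ℕ,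
      |(P.comp (X + C r)).coeff j| ≤ B * ((P.support.sup fun i => (P.coeff i).natAbs : ℕ) : ℤ) := by
  classical
  set D : ℤ := ((k:ℤ)+1) * (2*(k:ℤ)+2)^k with hD
  have hD0 : 0 ≤ D := by positivity
  refine ⟨1 + D, by linarith, ?_⟩
  intro r hr P hP j
  set N : ℤ := ((P.support.sup fun i => (P.coeff i).natAbs : ℕ) : ℤ) with hN
  have hN0 : 0 ≤ N := Int.natCast_nonneg _
  have hcoeffN : ∀ n : ℕ, |P.coeff n| ≤ N := by
    intro n
    rcases eq_or_ne (P.coeff n) 0 with h0 | h0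
    · simp [h0, hN0]
    · rw [Int.abs_eq_natAbs, hN]
      exact_mod_cast Finset.le_sup (f := fun i => (P.coeff i).natAbs)
        (Polynomial.mem_support_iff.2 h0)
  -- expand comp
  have hPsum : P.comp (X + C r)
      = ∑ m ∈ Finset.range (k+1), C (P.coeff m) * (X + C r) ^ m := by
    conv_lhs => rw [P.as_sum_range' (k+1) (by omega)]
    rw [Polynomial.sum_comp]
    exact Finset.sum_congr rfl fun m _ => Polynomial.monomial_comp m
  rw [hPsum, finset_sum_coeff]
  refine le_trans (Finset.abs_sum_le_sum_abs _ _) ?_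
  have hterm : ∀ m ∈ Finset.range (k+1),
      |(C (P.coeff m) * (X + C r) ^ m).coeff j| ≤ N * (2*(k:ℤ)+2)^k := by
    intro m hm
    have hmk : m ≤ k := by have := Finset.mem_range.mp hm; omega
    rw [coeff_C_mul, abs_mul]
    have h1 : |((X + C r) ^ m).coeff j| ≤ (2*(k:ℤ)+2)^k := by
      rw [coeff_X_add_C_pow, abs_mul, abs_pow]
      have hr' : |r| ≤ (k:ℤ)+1 := by
        rw [Int.abs_eq_natAbs]
        exact_mod_cast Nat.le_succ_of_le hr
      have hch : (m.choose j : ℤ) ≤ 2^k := by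
        have h2 : m.choose j ≤ 2^k := by
          rcases le_or_gt j m with hj2 | hj2
          · calc m.choose j ≤ ∑ i ∈ Finset.range (m+1), m.choose i :=
                Finset.single_le_sum (fun i _ => Nat.zero_le _)
                  (Finset.mem_range.mpr (by omega))
              _ = 2^m := Nat.sum_range_choose m
              _ ≤ 2^k := Nat.pow_le_pow_right (by norm_num) hmk
          · rw [Nat.choose_eq_zero_of_lt hj2]; exact Nat.zero_le _
        calc (m.choose j : ℤ) ≤ ((2^k : ℕ) : ℤ) := by exact_mod_cast h2
          _ = 2^k := by push_cast; ring
      have habs : |(m.choose j : ℤ)| = (m.choose j : ℤ) := abs_of_nonneg (Int.natCast_nonneg _)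
      calc |r|^(m-j) * |(m.choose j : ℤ)| ≤ ((k:ℤ)+1)^k * 2^k := by
            rw [habs]
            refine mul_le_mul ?_ hch (Int.natCast_nonneg _) (by positivity)
            have hs1 : |r|^(m-j) ≤ ((k:ℤ)+1)^(m-j) :=
              pow_le_pow_left₀ (abs_nonneg r) hr' (m-j)
            have hs2 : ((k:ℤ)+1)^(m-j) ≤ ((k:ℤ)+1)^k :=
              pow_le_pow_right₀ (by omega) (by omega)
            exact hs1.trans hs2
        _ = (2*(k:ℤ)+2)^k := by rw [← mul_pow]; ring_nf
    exact mul_le_mul (hcoeffN m) h1 (abs_nonneg _) hN0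
  refine le_trans (Finset.sum_le_sum hterm) ?_
  rw [Finset.sum_const, Finset.card_range, nsmul_eq_mul]
  have hfin : ((k+1 : ℕ) : ℤ) * (N * (2*(k:ℤ)+2)^k) = D * N := by rw [hD]; push_cast; ring
  rw [hfin]
  nlinarith [hN0, hD0]

lemma interpolation_bound (k : ℕ) :
    ∃ C : ℝ, 1 ≤ C ∧ ∀ P : Polynomial ℤ, P.natDegree ≤ k → ∀ V : ℝ,
      (∀ i : Fin (k+1), ((P.eval ((i : ℕ) : ℤ)).natAbs : ℝ) ≤ V) →
      intPolyNorm P ≤ C * V := by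
  classical
  set s : Finset ℕ := Finset.range (k+1) with hs
  set v : ℕ → ℝ := fun n => (n : ℝ) with hv
  have hvs : Set.InjOn v s := fun a _ b _ h => Nat.cast_injective h
  set C0 : ℝ := ∑ i ∈ s, ∑ j ∈ s, |(Lagrange.basis s v i).coeff j| with hC0
  have hC0nn : 0 ≤ C0 := by positivity
  refine ⟨C0 + 1, by linarith, ?_⟩
  intro P hP V hV
  have hV0 : (0:ℝ) ≤ V := le_trans (Nat.cast_nonneg _) (hV 0)
  rcases eq_or_ne P 0 with rfl | hP0
  · have hz : intPolyNorm 0 = 0 := by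
      simp only [intPolyNorm, Polynomial.support_zero, Finset.sup_empty]
      norm_num
    rw [hz]
    positivity
  set f : Polynomial ℝ := P.map (Int.castRingHom ℝ) with hf
  have hfdeg : f.degree < (s.card : ℕ) := by
    rw [hs, Finset.card_range]
    calc f.degree ≤ P.degree := Polynomial.degree_map_le
      _ ≤ (P.natDegree : WithBot ℕ) := Polynomial.degree_le_natDegree
      _ ≤ (k : WithBot ℕ) := by exact_mod_cast hP
      _ < ((k+1 : ℕ) : WithBot ℕ) := by exact_mod_cast Nat.lt_succ_self k
  have heq := Lagrange.eq_interpolate hvs hfdeg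
  have hcoeff : ∀ j, f.coeff j = ∑ i ∈ s, f.eval (v i) * (Lagrange.basis s v i).coeff j := by
    intro j
    conv_lhs => rw [heq]
    rw [Lagrange.interpolate_apply, Polynomial.finset_sum_coeff]
    exact Finset.sum_congr rfl fun i _ => by rw [Polynomial.coeff_C_mul]
  have hevalb : ∀ i ∈ s, |f.eval (v i)| ≤ V := by
    intro i hi
    have hi' : i < k+1 := by rw [hs] at hi; exact Finset.mem_range.mp hi
    have he : f.eval (v i) = ((P.eval ((i:ℕ):ℤ) : ℤ) : ℝ) := by
      have hvi : v i = (((i:ℕ):ℤ) : ℝ) := by rw [hv]; push_cast; rfl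
      rw [hf, hvi, Polynomial.eval_map]
      exact Polynomial.eval₂_at_apply (Int.castRingHom ℝ) _
    rw [he, ← Int.cast_abs, ← Nat.cast_natAbs]
    simpa using hV ⟨i, hi'⟩
  have hcb : ∀ j ∈ s, |f.coeff j| ≤ C0 * V := by
    intro j hj
    rw [hcoeff j]
    refine le_trans (Finset.abs_sum_le_sum_abs _ _) ?_
    have hstep : ∀ i ∈ s, |f.eval (v i) * (Lagrange.basis s v i).coeff j|
        ≤ V * |(Lagrange.basis s v i).coeff j| := by
      intro i hi
      rw [abs_mul]
      exact mul_le_mul_of_nonneg_right (hevalb i hi) (abs_nonneg _)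
    refine le_trans (Finset.sum_le_sum hstep) ?_
    rw [← Finset.mul_sum, mul_comm]
    refine mul_le_mul_of_nonneg_right ?_ hV0
    refine Finset.sum_le_sum fun i _ => ?_
    exact Finset.single_le_sum (f := fun j' => |(Lagrange.basis s v i).coeff j'|)
      (fun j' _ => abs_nonneg _) hj
  obtain ⟨n0, hn0mem, hn0⟩ := Finset.exists_mem_eq_sup P.support
    (Polynomial.support_nonempty.2 hP0) (fun i => (P.coeff i).natAbs)
  have hn0k : n0 ≤ k := le_trans (Polynomial.le_natDegree_of_mem_supp n0 hn0mem) hP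
  have he1 : intPolyNorm P = ((P.coeff n0).natAbs : ℝ) := by rw [intPolyNorm, hn0]
  have he2 : ((P.coeff n0).natAbs : ℝ) = |f.coeff n0| := by
    rw [hf, Polynomial.coeff_map, Nat.cast_natAbs, Int.cast_abs]
    norm_num
  rw [he1, he2]
  calc |f.coeff n0| ≤ C0 * V := hcb n0 (by rw [hs]; exact Finset.mem_range.mpr (by omega))
    _ ≤ (C0 + 1) * V := by nlinarith

lemma omegaLeadExp_inv_int (k : ℕ) (hk : 1 ≤ k) {d : ℤ} (hd : d ≠ 0) (w : ℝ) :
    (w : EReal) ≤ omegaLeadExp k (1 / (d : ℝ)) := by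
  classical
  set q : ℤ := |d| with hq
  set p : ℤ := d.sign with hp
  have hq1 : 1 ≤ q := by rw [hq]; exact Int.one_le_abs hd
  have hq0 : q ≠ 0 := by omega
  have hpabs : p.natAbs = 1 := by rw [hp]; exact Int.natAbs_sign_of_ne_zero hd
  have hdr : (d : ℝ) ≠ 0 := Int.cast_ne_zero.mpr hd
  have hqd : (q : ℝ) * (1 / (d:ℝ)) = (p : ℝ) := by
    rcases lt_trichotomy d 0 with h | h | h
    · rw [hq, hp, abs_of_neg h, Int.sign_eq_neg_one_iff_neg.mpr h]
      push_cast
      field_simp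
    · omega
    · rw [hq, hp, abs_of_pos h, Int.sign_eq_one_iff_pos.mpr h]
      push_cast
      field_simp
  set f : ℕ → Polynomial ℤ := fun N =>
    C (((N:ℤ)+1) * q) * X ^ k + C (-(((N:ℤ)+1) * p)) * X ^ (k-1) with hf
  have hcoeff : ∀ N m, (f N).coeff m =
      (if m = k then ((N:ℤ)+1) * q else 0) + (if m = k-1 then -(((N:ℤ)+1) * p) else 0) := by
    intro N m
    rw [hf]
    simp only [Polynomial.coeff_add, coeff_C_mul_X_pow']
  have hck : ∀ N, (f N).coeff k = ((N:ℤ)+1) * q := by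
    intro N
    rw [hcoeff]
    rw [if_pos rfl, if_neg (by omega)]
    ring
  have hck1 : ∀ N, (f N).coeff (k-1) = -(((N:ℤ)+1) * p) := by
    intro N
    rw [hcoeff, if_neg (by omega), if_pos rfl]
    ring
  have hckne : ∀ N, (f N).coeff k ≠ 0 := by
    intro N
    rw [hck N]
    positivity
  apply le_sSup_of_forall_lt_mem
  intro ω _
  apply Set.infinite_of_injective_forall_mem (f := f)
  · intro N N' h
    have h2 := congrArg (fun Q => Q.coeff k) h
    simp only [hck] at h2
    have h3 := mul_right_cancel₀ hq0 h2
    omega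
  · intro N
    refine ⟨fun h0 => hckne N (by rw [h0]; simp), ?_, ?_, ?_⟩
    · refine le_trans (Polynomial.natDegree_add_le _ _) ?_
      exact max_le ((Polynomial.natDegree_C_mul_X_pow_le _ _))
        (le_trans (Polynomial.natDegree_C_mul_X_pow_le _ _) (by omega))
    · refine intPolyNorm_eq_of_dominant (hckne N) ?_
      intro n
      rw [hcoeff N n, hck N]
      rcases eq_or_ne n k with rfl | h1
      · rw [if_pos rfl, if_neg (by omega)]; rw [add_zero]
      rcases eq_or_ne n (k-1) with rfl | h2
      · rw [if_neg (by omega), if_pos rfl, zero_add, Int.natAbs_neg, Int.natAbs_mul,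
          Int.natAbs_mul, hpabs]
        have : (0:ℤ) ≤ (N:ℤ) + 1 := by omega
        have hNa : ((N:ℤ)+1).natAbs = N + 1 := by omega
        rw [hNa]
        have hqa : 1 ≤ q.natAbs := by omega
        calc (N+1) * 1 = N+1 := by ring
          _ ≤ (N+1) * q.natAbs := by nlinarith
      · rw [if_neg h1, if_neg h2]; simp
    · have hgen : ∀ a b : ℤ, Polynomial.aeval (1/(d:ℝ)) (C a * X ^ k + C b * X ^ (k-1))
          = (a:ℝ) * (1/(d:ℝ))^k + (b:ℝ) * (1/(d:ℝ))^(k-1) := by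
        intro a b
        simp only [map_add, map_mul, aeval_C, map_pow, aeval_X, algebraMap_int_eq, eq_intCast, map_intCast]
      have hval : Polynomial.aeval (1/(d:ℝ)) (f N) = 0 := by
        have hfN : f N = C (((N:ℤ)+1) * q) * X ^ k + C (-(((N:ℤ)+1) * p)) * X ^ (k-1) := by
          rw [hf]
        rw [hfN, hgen]
        have hpow : (1/(d:ℝ))^k = (1/(d:ℝ))^(k-1) * (1/(d:ℝ)) := by
          rw [← pow_succ]
          congr 1
          omega
        rw [hpow]
        push_cast
        linear_combination ((N:ℝ)+1) * (1/(d:ℝ))^(k-1) * hqd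
      rw [hval, abs_zero]
      rcases eq_or_ne (f N) 0 with h0 | h0
      · exact absurd (by rw [h0]; simp) (hckne N)
      · exact Real.rpow_nonneg (intPolyNorm_nonneg _) _

/-- There exist distinct integers `r_0, …, r_k` and an integer `M ≥ 1` such that
`S = {ξ : ω_k(ξ) ≥ w}` satisfies `S ⊆ ⋃_i τ_i⁻¹(S^lead)` with `τ_i(ξ) = 1/(M(ξ − r_i))`,
and moreover `S^lead ⊆ S`. -/
theorem coveringByPreimages (k : ℕ) (hk : 1 ≤ k) (w : ℝ) :
    ∃ (r : Fin (k + 1) → ℤ) (M : ℤ), Function.Injective r ∧ 1 ≤ M ∧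
      ({ξ : ℝ | (w : EReal) ≤ omegaExp k ξ} ⊆
        ⋃ i : Fin (k + 1),
          {ξ : ℝ | ξ ≠ (r i : ℝ) ∧
            (w : EReal) ≤ omegaLeadExp k (1 / (M * (ξ - r i)))}) ∧
      ({ξ : ℝ | (w : EReal) ≤ omegaLeadExp k ξ} ⊆
        {ξ : ℝ | (w : EReal) ≤ omegaExp k ξ}) := by
  classical
  obtain ⟨C₁, hC₁1, hC₁⟩ := interpolation_bound k
  obtain ⟨B, hB1, hB⟩ := comp_coeff_bound k
  obtain ⟨n, hn⟩ := exists_nat_ge ((B : ℝ) * C₁)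
  set M : ℤ := (n : ℤ) + 1 with hMdef
  have hM1 : 1 ≤ M := by omega
  have hM0 : M ≠ 0 := by omega
  have hMreal : (B : ℝ) * C₁ ≤ (M : ℝ) := by
    rw [hMdef]; push_cast; linarith
  have hMR1 : (1 : ℝ) ≤ (M : ℝ) := by exact_mod_cast hM1
  refine ⟨fun i => ((i : ℕ) : ℤ), M, ?_, hM1, ?_, ?_⟩
  · intro a b h
    have h' : ((a : ℕ) : ℤ) = ((b : ℕ) : ℤ) := h
    exact Fin.ext (by exact_mod_cast h')
  · -- main inclusion
    intro ξ hξ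
    simp only [Set.mem_setOf_eq] at hξ
    by_cases hint : ∃ j : Fin (k + 1), ξ = (((j : ℕ) : ℤ) : ℝ)
    · -- ξ is an integer node: use another node
      obtain ⟨j, hj⟩ := hint
      set i : Fin (k + 1) := if (j : ℕ) = 0 then ⟨1, by omega⟩ else ⟨0, by omega⟩ with hi
      have hij : (i : ℕ) ≠ (j : ℕ) := by
        rw [hi]
        rcases eq_or_ne (j : ℕ) 0 with h0 | h0
        · rw [if_pos h0]
          simp only [h0]
          exact one_ne_zero
        · rw [if_neg h0]
          exact fun h => h0 h.symm
      have hne : ξ ≠ ((((i : ℕ) : ℤ) : ℝ)) := by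
        rw [hj]
        intro h
        exact hij (by exact_mod_cast h.symm)
      set d : ℤ := M * ((j : ℕ) - (i : ℕ) : ℤ) with hd
      have hd0 : d ≠ 0 := by
        rw [hd]
        apply mul_ne_zero hM0
        omega
      have hcast : ((M : ℝ) * (ξ - (((i : ℕ) : ℤ) : ℝ))) = (d : ℝ) := by
        rw [hj, hd]; push_cast; ring
      refine Set.mem_iUnion.mpr ⟨i, hne, ?_⟩
      rw [hcast]
      exact omegaLeadExp_inv_int k hk hd0 w
    · -- generic case
      push_neg at hint
      -- the "good at i with exponent ω" property
      set η : Fin (k + 1) → ℝ := fun i => 1 / ((M : ℝ) * (ξ - (((i : ℕ) : ℤ) : ℝ))) with hη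
      set G : Fin (k + 1) → ℝ → Prop := fun i ω =>
        {Q : Polynomial ℤ | Q ≠ 0 ∧ Q.natDegree ≤ k ∧
          ((Q.coeff k).natAbs : ℝ) = intPolyNorm Q ∧
          |Polynomial.aeval (η i) Q| ≤ intPolyNorm Q ^ (-ω)}.Infinite with hG
      have hmono : ∀ i : Fin (k + 1), ∀ ω ω' : ℝ, ω ≤ ω' → G i ω' → G i ω := by
        intro i ω ω' hle h
        refine h.mono ?_
        rintro Q ⟨h1, h2, h3, h4⟩
        refine ⟨h1, h2, h3, le_trans h4 ?_⟩
        exact Real.rpow_le_rpow_of_exponent_le (one_le_intPolyNorm h1) (by linarith)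
      have hstep1 : ∀ ω : ℝ, ω < w → ∃ i : Fin (k + 1), G i ω := by
        intro ω hωw
        rw [omegaExp] at hξ
        obtain ⟨ω'', hω''S, hωω''⟩ := exists_gt_of_le_sSup hξ hωw
        set ε : ℝ := ω'' - ω with hε
        have hε0 : 0 < ε := by rw [hε]; linarith
        set S : Set (Polynomial ℤ) := {P | P ≠ 0 ∧ P.natDegree ≤ k ∧
          |Polynomial.aeval ξ P| ≤ intPolyNorm P ^ (-ω'')} with hSdef
        have hSinf : S.Infinite := hω''S
        have hargmax : ∀ P : Polynomial ℤ, ∃ i : Fin (k + 1),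
            ∀ i' : Fin (k + 1),
              (P.eval (((i' : ℕ) : ℤ))).natAbs ≤ (P.eval (((i : ℕ) : ℤ))).natAbs := by
          intro P
          obtain ⟨b, _, hb⟩ := Finset.exists_max_image Finset.univ
            (fun i : Fin (k + 1) => (P.eval (((i : ℕ) : ℤ))).natAbs) ⟨0, Finset.mem_univ 0⟩
          exact ⟨b, fun i' => hb i' (Finset.mem_univ i')⟩
        choose iP hiP using hargmax
        have hpigeon : ∃ i : Fin (k + 1), {P | P ∈ S ∧ iP P = i}.Infinite := by
          by_contra hc
          push_neg at hc
          refine hSinf (Set.Finite.subset (Set.finite_iUnion hc) ?_)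
          exact fun P hP => Set.mem_iUnion.mpr ⟨iP P, hP, rfl⟩
        obtain ⟨i, hSi⟩ := hpigeon
        refine ⟨i, ?_⟩
        set ri : ℤ := ((i : ℕ) : ℤ) with hri
        set dξ : ℝ := ξ - (ri : ℝ) with hdξdef
        have hdξ : dξ ≠ 0 := by
          rw [hdξdef, hri]
          exact sub_ne_zero.mpr (hint i)
        have hMRne : ((M : ℝ)) ≠ 0 := Int.cast_ne_zero.mpr hM0
        have hu : (M : ℝ) * η i = 1 / dξ := by
          rw [hη]
          simp only [one_div]
          rw [hdξdef, hri, mul_inv, ← mul_assoc, mul_inv_cancel₀ hMRne, one_mul]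
        set A : ℝ := (B : ℝ) * (M : ℝ) ^ k with hA
        have hBR1 : (1 : ℝ) ≤ (B : ℝ) := by exact_mod_cast hB1
        have hMk1 : (1 : ℝ) ≤ (M : ℝ) ^ k := one_le_pow₀ hMR1
        have hA1 : 1 ≤ A := by rw [hA]; nlinarith
        set Gc : ℝ := max (Real.log A) (Real.log C₁) with hGc
        set Ld : ℝ := Real.log |1 / dξ| with hLd
        set H₀ : ℝ := Real.exp (((k : ℝ) * Ld + |ω| * Gc + ε * Gc) / ε) with hH₀
        have hinj : Set.InjOn (Qpoly k M ri) {P | P ∈ S ∧ iP P = i} :=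
          (Qpoly_injOn k hM0 ri).mono (fun P hP => hP.1.2.1)
        have hbig : (((Qpoly k M ri) '' {P | P ∈ S ∧ iP P = i}) \
            {Q | Q.natDegree ≤ k ∧ intPolyNorm Q ≤ H₀}).Infinite :=
          (hSi.image hinj).diff (finite_polys k H₀)
        simp only [hG]
        refine hbig.mono ?_
        rintro Q ⟨⟨P, ⟨⟨hP0, hPdeg, hPval⟩, hiPi⟩, rfl⟩, hQnot⟩
        set a : ℕ → ℤ := fun j => (P.comp (X + C ri)).coeff j with ha
        have hcoeffQ : ∀ m : ℕ, m ≤ k → (Qpoly k M ri P).coeff m = a (k - m) * M ^ m :=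
          fun m hm => Qpoly_coeff k M ri P m hm
        have ha0eval : a 0 = P.eval ri := by
          rw [ha]
          simp only []
          rw [Polynomial.coeff_zero_eq_eval_zero, Polynomial.eval_comp]
          simp
        have hVbound : ∀ i' : Fin (k + 1),
            ((P.eval (((i' : ℕ) : ℤ))).natAbs : ℝ) ≤ ((P.eval ri).natAbs : ℝ) := by
          intro i'
          have h7 := hiP P i'
          rw [hiPi] at h7
          rw [hri]
          exact_mod_cast h7
        have hinterp : intPolyNorm P ≤ C₁ * ((P.eval ri).natAbs : ℝ) := hC₁ P hPdeg _ hVbound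
        have hx1 : 1 ≤ intPolyNorm P := one_le_intPolyNorm hP0
        have ha0 : a 0 ≠ 0 := by
          rw [ha0eval]
          intro h
          rw [h] at hinterp
          simp only [Int.natAbs_zero, Nat.cast_zero, mul_zero] at hinterp
          linarith
        have hNcast : ((((P.support.sup fun m => (P.coeff m).natAbs) : ℕ) : ℤ) : ℝ)
            = intPolyNorm P := by
          rw [intPolyNorm]; push_cast; ring
        have haj : ∀ j : ℕ, |((a j : ℤ) : ℝ)| ≤ (B : ℝ) * intPolyNorm P := by
          intro j
          have h1 := hB ri (by rw [hri, Int.natAbs_natCast]; exact Nat.lt_succ_iff.mp i.isLt)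
            P hPdeg j
          rw [← hNcast, ← Int.cast_mul, ← Int.cast_abs]
          exact_mod_cast h1
        have ha0absR : ((P.eval ri).natAbs : ℝ) = |((a 0 : ℤ) : ℝ)| := by
          rw [Nat.cast_natAbs, Int.cast_abs, ha0eval]
        have hdomR : ∀ j : ℕ, |((a j : ℤ) : ℝ)| ≤ (M : ℝ) * |((a 0 : ℤ) : ℝ)| := by
          intro j
          calc |((a j : ℤ) : ℝ)| ≤ (B : ℝ) * intPolyNorm P := haj j
            _ ≤ (B : ℝ) * (C₁ * ((P.eval ri).natAbs : ℝ)) :=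
                mul_le_mul_of_nonneg_left hinterp (by linarith)
            _ = (B : ℝ) * C₁ * |((a 0 : ℤ) : ℝ)| := by rw [ha0absR]; ring
            _ ≤ (M : ℝ) * |((a 0 : ℤ) : ℝ)| :=
                mul_le_mul_of_nonneg_right hMreal (abs_nonneg _)
        have hdomZ : ∀ j : ℕ, |a j| ≤ M * |a 0| := by
          intro j
          have h5 : ((|a j| : ℤ) : ℝ) ≤ ((M * |a 0| : ℤ) : ℝ) := by
            push_cast
            exact hdomR j
          exact_mod_cast h5
        have hQk : (Qpoly k M ri P).coeff k = a 0 * M ^ k := by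
          rw [hcoeffQ k le_rfl, Nat.sub_self]
        have hQkne : (Qpoly k M ri P).coeff k ≠ 0 := by
          rw [hQk]
          exact mul_ne_zero ha0 (pow_ne_zero _ hM0)
        have hQ0 : Qpoly k M ri P ≠ 0 := fun h => hQkne (by rw [h]; simp)
        have hQdeg : (Qpoly k M ri P).natDegree ≤ k := Qpoly_natDegree_le k M ri P
        have hdomcoeff : ∀ m : ℕ,
            ((Qpoly k M ri P).coeff m).natAbs ≤ ((Qpoly k M ri P).coeff k).natAbs := by
          intro m
          rcases le_or_gt m k with hm | hm
          · rcases eq_or_ne m k with rfl | hmk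
            · exact le_rfl
            · have h6 : |(Qpoly k M ri P).coeff m| ≤ |(Qpoly k M ri P).coeff k| := by
                rw [hcoeffQ m hm, hQk, abs_mul, abs_mul, abs_pow, abs_pow,
                  abs_of_pos (by omega : (0:ℤ) < M)]
                calc |a (k - m)| * M ^ m ≤ (M * |a 0|) * M ^ m :=
                    mul_le_mul_of_nonneg_right (hdomZ (k - m)) (pow_nonneg (by omega) m)
                  _ = |a 0| * M ^ (m + 1) := by ring
                  _ ≤ |a 0| * M ^ k :=
                    mul_le_mul_of_nonneg_left
                      (pow_le_pow_right₀ (by omega) (by omega)) (abs_nonneg _)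
              rw [Int.abs_eq_natAbs, Int.abs_eq_natAbs] at h6
              exact_mod_cast h6
          · rw [Qpoly_coeff_eq_zero k M ri P m hm]
            simp
        have hlead : (((Qpoly k M ri P).coeff k).natAbs : ℝ) = intPolyNorm (Qpoly k M ri P) :=
          intPolyNorm_eq_of_dominant hQkne hdomcoeff
        set x : ℝ := intPolyNorm P with hxdef
        set y : ℝ := intPolyNorm (Qpoly k M ri P) with hydef
        have hy1 : 1 ≤ y := one_le_intPolyNorm hQ0
        have hMRpos : (0 : ℝ) < (M : ℝ) := by linarith
        have hyval : y = |((a 0 : ℤ) : ℝ)| * (M : ℝ) ^ k := by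
          rw [← hlead, hQk, Nat.cast_natAbs, Int.cast_abs]
          push_cast
          rw [abs_mul, abs_pow, abs_of_pos hMRpos]
        have hxC1y : x ≤ C₁ * y := by
          calc x ≤ C₁ * ((P.eval ri).natAbs : ℝ) := hinterp
            _ = C₁ * |((a 0 : ℤ) : ℝ)| := by rw [ha0absR]
            _ ≤ C₁ * y := by
                rw [hyval]
                refine mul_le_mul_of_nonneg_left ?_ (by linarith)
                nlinarith [abs_nonneg ((a 0 : ℤ) : ℝ)]
        have hyAx : y ≤ A * x := by
          rw [hyval, hA]
          calc |((a 0 : ℤ) : ℝ)| * (M : ℝ) ^ k ≤ ((B : ℝ) * x) * (M : ℝ) ^ k :=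
              mul_le_mul_of_nonneg_right (haj 0) (by positivity)
            _ = (B : ℝ) * (M : ℝ) ^ k * x := by ring
        have hQbig : H₀ < y := by
          by_contra hle
          push_neg at hle
          exact hQnot ⟨hQdeg, hle⟩
        have hMη : (M : ℝ) * η i ≠ 0 := by
          rw [hu]
          exact one_div_ne_zero hdξ
        have hback : 1 / ((M : ℝ) * η i) + (ri : ℝ) = ξ := by
          rw [hu, one_div_one_div, hdξdef]
          ring
        have hvalQ : Polynomial.aeval (η i) (Qpoly k M ri P)
            = (1 / dξ) ^ k * Polynomial.aeval ξ P := by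
          rw [Qpoly_aeval k M ri P hPdeg hMη, hback, hu]
        have hx0 : (0 : ℝ) < x := by linarith
        have hy0 : (0 : ℝ) < y := by linarith
        have hL1 : Real.log y ≤ Real.log A + Real.log x := by
          rw [← Real.log_mul (by linarith) (ne_of_gt hx0)]
          exact Real.log_le_log hy0 hyAx
        have hL2 : Real.log x ≤ Real.log C₁ + Real.log y := by
          rw [← Real.log_mul (by linarith : C₁ ≠ 0) (ne_of_gt hy0)]
          exact Real.log_le_log hx0 hxC1y
        have hlA : Real.log A ≤ Gc := by rw [hGc]; exact le_max_left _ _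
        have hlC : Real.log C₁ ≤ Gc := by rw [hGc]; exact le_max_right _ _
        have hlogy : ((k : ℝ) * Ld + |ω| * Gc + ε * Gc) / ε < Real.log y := by
          have h8 := Real.log_lt_log (Real.exp_pos _) hQbig
          rwa [Real.log_exp] at h8
        have hexp : (k : ℝ) * Ld + (-ω'') * Real.log x ≤ (-ω) * Real.log y := by
          have hb1 : ω * (Real.log y - Real.log x) ≤ |ω| * Gc := by
            calc ω * (Real.log y - Real.log x) ≤ |ω * (Real.log y - Real.log x)| :=
                le_abs_self _
              _ = |ω| * |Real.log y - Real.log x| := abs_mul _ _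
              _ ≤ |ω| * Gc := by
                  refine mul_le_mul_of_nonneg_left ?_ (abs_nonneg ω)
                  rw [abs_sub_le_iff]
                  exact ⟨by linarith, by linarith⟩
          have hεy : ε * (Real.log y - Gc) ≤ ε * Real.log x :=
            mul_le_mul_of_nonneg_left (by linarith) hε0.le
          have hly : (k : ℝ) * Ld + |ω| * Gc + ε * Gc ≤ ε * Real.log y := by
            rw [div_lt_iff₀ hε0] at hlogy
            linarith
          have hωε : (-ω'') * Real.log x = -(ω * Real.log x) - ε * Real.log x := by
            rw [hε]; ring
          rw [hωε]
          linarith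
        refine ⟨hQ0, hQdeg, hlead, ?_⟩
        rw [hvalQ, abs_mul, abs_pow]
        have e1 : x ^ (-ω'') = Real.exp ((-ω'') * Real.log x) := by
          rw [Real.rpow_def_of_pos hx0, mul_comm]
        have e2 : y ^ (-ω) = Real.exp ((-ω) * Real.log y) := by
          rw [Real.rpow_def_of_pos hy0, mul_comm]
        have e3 : |1 / dξ| ^ k = Real.exp ((k : ℝ) * Ld) := by
          rw [hLd, ← Real.log_pow,
            Real.exp_log (pow_pos (abs_pos.mpr (one_div_ne_zero hdξ)) k)]
        calc |1 / dξ| ^ k * |Polynomial.aeval ξ P| ≤ |1 / dξ| ^ k * x ^ (-ω'') :=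
            mul_le_mul_of_nonneg_left hPval (pow_nonneg (abs_nonneg _) k)
          _ = Real.exp ((k : ℝ) * Ld + (-ω'') * Real.log x) := by
              rw [e3, e1, ← Real.exp_add]
          _ ≤ Real.exp ((-ω) * Real.log y) := Real.exp_le_exp.mpr hexp
          _ = y ^ (-ω) := e2.symm
      have hstep3 : ∃ i : Fin (k + 1), ∀ ω : ℝ, ω < w → G i ω := by
        by_contra hc
        push_neg at hc
        choose ωf hωf hωfG using hc
        set ωs : ℝ := Finset.univ.sup' Finset.univ_nonempty ωf with hωs
        have hωsw : ωs < w := by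
          rw [hωs, Finset.sup'_lt_iff]
          exact fun i _ => hωf i
        obtain ⟨i, hGi⟩ := hstep1 ωs hωsw
        exact hωfG i (hmono i (ωf i) ωs (Finset.le_sup' ωf (Finset.mem_univ i)) hGi)
      obtain ⟨i, hGi⟩ := hstep3
      refine Set.mem_iUnion.mpr ⟨i, hint i, ?_⟩
      rw [omegaLeadExp]
      exact le_sSup_of_forall_lt_mem fun x hx => hGi x hx
  · -- S^lead ⊆ S
    intro ξ hξ
    simp only [Set.mem_setOf_eq] at hξ ⊢
    refine le_trans hξ (sSup_le_sSup (Set.image_mono ?_))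
    intro ω h
    exact h.mono fun P hP => ⟨hP.1, hP.2.1, hP.2.2.2⟩
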